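/- Let X be a simplicial complex with facets σ_1, …, σ_m, all of dimension d−1 (pure), such that for any facet ordering the complex is strongly connected, i.e., any two facets are joined by a sequence of facets in which consecutive ones intersect in a face of dimension d−2. Then there exists a facet ordering ≺ with Σ_{j=2}^m (dim σ_j − conn_≺ σ_j) = 0, and consequently L(X) ≤ m − |V(X)| + d = deg − codim + 1, where deg = m is the number of facets and codim = |V(X)| − d. -/

import Mathlib

open Finset

variable {V : Type*} [DecidableEq V] [Fintype V]

/-- An abstract simplicial complex: a finite collection of faces closed under subsets. -/
def IsComplex (X : Finset (Finset V)) : Prop :=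
  ∀ s ∈ X, ∀ t, t ⊆ s → t ∈ X

/-- A collection of faces is a simplex if it is the full power set of some vertex set
(possibly empty). -/
def IsSimplexC (Y : Finset (Finset V)) : Prop := ∃ τ : Finset V, Y = τ.powerset

/-- The induced subcomplex `X[W]`. -/
def indOn (X : Finset (Finset V)) (W : Finset V) : Finset (Finset V) :=
  X.filter (fun s => s ⊆ W)

/-- The `ℤ/2ℤ` boundary of a chain, a chain being recorded as the finite set of faces with
coefficient `1`.  The coefficient of `τ` in `∂ c` is the parity of the number of faces of `c`
covering `τ`.  (This includes the augmentation `∂₀`, with `∅` playing the role of the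
generator of `C₋₁`, so homology is reduced homology.) -/
def bdry (c : Finset (Finset V)) : Finset (Finset V) :=
  Finset.univ.filter (fun τ => Odd (c.filter (fun s => τ ⊆ s ∧ s.card = τ.card + 1)).card)

/-- Sum of chains over `ℤ/2ℤ` (symmetric difference). -/
def chAdd (c d : Finset (Finset V)) : Finset (Finset V) := (c \ d) ∪ (d \ c)

/-- An `n`-dimensional chain of `X` (each face has `n+1` vertices). -/
def IsNChain (X : Finset (Finset V)) (n : ℕ) (c : Finset (Finset V)) : Prop :=
  c ⊆ X ∧ ∀ s ∈ c, s.card = n + 1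

/-- An `n`-cycle of `X` (reduced: `0`-cycles have evenly many vertices). -/
def IsNCycle (X : Finset (Finset V)) (n : ℕ) (c : Finset (Finset V)) : Prop :=
  IsNChain X n c ∧ bdry c = ∅

/-- An `n`-boundary of `X`. -/
def IsNBdry (X : Finset (Finset V)) (n : ℕ) (c : Finset (Finset V)) : Prop :=
  ∃ d, IsNChain X (n + 1) d ∧ bdry d = c

/-- `X` is `d`-Leray: all reduced homology of induced subcomplexes vanishes in
dimensions `≥ d`. -/
def IsLeray (X : Finset (Finset V)) (d : ℕ) : Prop :=
  ∀ W : Finset V, ∀ i : ℕ, d ≤ i → ∀ c,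
    IsNCycle (indOn X W) i c → IsNBdry (indOn X W) i c

/-- The Leray number `L(X)`. -/
noncomputable def lerayNum (X : Finset (Finset V)) : ℕ := sInf {d | IsLeray X d}

/-- The facets (maximal faces) of `X`. -/
def facetsOf (X : Finset (Finset V)) : Finset (Finset V) :=
  X.filter (fun s => ∀ t ∈ X, s ⊆ t → s = t)

/-- `σ 0, …, σ (m-1)` is an enumeration (linear ordering) of the facets of `X`. -/
def IsFacetEnum (X : Finset (Finset V)) (m : ℕ) (σ : ℕ → Finset V) : Prop :=
  (∀ i, i < m → σ i ∈ facetsOf X) ∧ (∀ s ∈ facetsOf X, ∃ i, i < m ∧ σ i = s) ∧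
    (∀ i j, i < m → j < m → σ i = σ j → i = j)

/-- `X_j = ⋃_{i < j} Δ(σ i)`. -/
def cUnion (σ : ℕ → Finset V) (j : ℕ) : Finset (Finset V) :=
  (Finset.range j).biUnion (fun i => (σ i).powerset)

-- `Mval σ j = M_≺(X_{j+1})`: starts at `1`, increases by `1` exactly when the newly
-- attached simplex meets the union of the previous ones in a non-simplex.
open Classical in
noncomputable def Mval (σ : ℕ → Finset V) : ℕ → ℕ
  | 0 => 1
  | (j+1) => Mval σ j + (if IsSimplexC (cUnion σ (j+1) ∩ (σ (j+1)).powerset) then 0 else 1)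

/-- `M(X)`: the minimum of `M_≺(X)` over all facet orderings. -/
noncomputable def Mnum (X : Finset (Finset V)) : ℕ :=
  sInf {k | ∃ m σ, 0 < m ∧ IsFacetEnum X m σ ∧ k = Mval σ (m - 1)}

/-- The facet ordering `σ 0 ≺ ⋯ ≺ σ (m-1)` is a weak shelling. -/
def IsWeakShelling (σ : ℕ → Finset V) (m : ℕ) : Prop :=
  ∀ j, 1 ≤ j → j < m → ∃ u ∈ σ j, IsSimplexC (indOn (cUnion σ j) ((σ j).erase u))

/-- `c` is the edge set of a cycle (graph cycle, length `≥ 3`). -/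
def IsCycleEdges (c : Finset (Finset V)) : Prop :=
  ∃ n : ℕ, 3 ≤ n ∧ ∃ f : ℕ → V, (∀ i j, i < n → j < n → f i = f j → i = j) ∧
    c = (Finset.range n).image (fun i => ({f i, f ((i + 1) % n)} : Finset V))

set_option linter.unusedSectionVars false

lemma mem_bdry {c : Finset (Finset V)} {τ : Finset V} :
    τ ∈ bdry c ↔ Odd ((c.filter (fun s => τ ⊆ s ∧ s.card = τ.card + 1)).card) := by
  simp [bdry]

lemma bdry_empty : bdry (∅ : Finset (Finset V)) = ∅ := by
  ext τ; simp [bdry]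

lemma chAdd_eq_symmDiff (c d : Finset (Finset V)) : chAdd c d = symmDiff c d := rfl

lemma odd_add_iff (a b : ℕ) : Odd (a + b) ↔ (Odd a ↔ ¬ Odd b) := by
  simp [Nat.odd_iff]; omega

lemma card_symmDiff_parity {α : Type*} [DecidableEq α] (u v : Finset α) :
    Odd (symmDiff u v).card ↔ (Odd u.card ↔ ¬ Odd v.card) := by
  have h1 : (symmDiff u v).card = (u \ v).card + (v \ u).card := by
    rw [symmDiff_def]
    exact Finset.card_union_of_disjoint (disjoint_sdiff_sdiff)
  have h2 := Finset.card_sdiff_add_card_inter u v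
  have h3 := Finset.card_sdiff_add_card_inter v u
  rw [Finset.inter_comm v u] at h3
  simp only [Nat.odd_iff] at *
  omega

lemma bdry_chAdd (c d : Finset (Finset V)) :
    bdry (chAdd c d) = chAdd (bdry c) (bdry d) := by
  ext τ
  have hf : ∀ (p : Finset V → Prop) [DecidablePred p],
      (symmDiff c d).filter p = symmDiff (c.filter p) (d.filter p) := by
    intro p _; ext a; simp [mem_symmDiff]; tauto
  simp only [chAdd_eq_symmDiff, mem_bdry, mem_symmDiff, hf, card_symmDiff_parity]
  tauto
lemma odd_card_filter_iff {α : Type*} [DecidableEq α] (A : Finset α) (g : α → ℕ) :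
    Odd ((A.filter (fun a => Odd (g a))).card) ↔ Odd (∑ a ∈ A, g a) := by
  induction A using Finset.induction with
  | empty => simp
  | insert _ _ h ih =>
    rename_i a A
    rw [Finset.filter_insert, Finset.sum_insert h]
    by_cases hg : Odd (g a)
    · rw [if_pos hg, Finset.card_insert_of_notMem (fun hmem => h (Finset.mem_filter.mp hmem).1)]
      simp only [Nat.odd_iff] at *
      omega
    · rw [if_neg hg]
      simp only [Nat.odd_iff] at *
      omega

/-- number of sets strictly between τ and u at level |τ|+1 -/
lemma card_between (τ u : Finset V) (h : τ ⊆ u) :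
    ((Finset.univ : Finset (Finset V)).filter
      (fun s => (τ ⊆ s ∧ s.card = τ.card + 1) ∧ s ⊆ u)).card = (u \ τ).card := by
  have himg : (Finset.univ : Finset (Finset V)).filter
      (fun s => (τ ⊆ s ∧ s.card = τ.card + 1) ∧ s ⊆ u) = (u \ τ).image (fun v => insert v τ) := by
    ext s
    simp only [Finset.mem_filter, Finset.mem_univ, true_and, Finset.mem_image, Finset.mem_sdiff]
    constructor
    · rintro ⟨⟨hts, hcard⟩, hsu⟩
      have h1 : (s \ τ).card = 1 := by
        rw [Finset.card_sdiff_of_subset hts]; omega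
      obtain ⟨v, hv⟩ := Finset.card_eq_one.mp h1
      have hvs : v ∈ s \ τ := by rw [hv]; exact Finset.mem_singleton_self v
      rw [Finset.mem_sdiff] at hvs
      refine ⟨v, ⟨hsu hvs.1, hvs.2⟩, ?_⟩
      apply Finset.eq_of_subset_of_card_le
      · intro x hx
        rcases Finset.mem_insert.mp hx with rfl | hx
        · exact hvs.1
        · exact hts hx
      · rw [Finset.card_insert_of_notMem hvs.2]; omega
    · rintro ⟨v, ⟨hvu, hvt⟩, rfl⟩
      exact ⟨⟨Finset.subset_insert _ _, Finset.card_insert_of_notMem hvt⟩,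
        Finset.insert_subset hvu h⟩
  rw [himg, Finset.card_image_of_injOn]
  intro x hx y hy hxy
  simp only [Finset.coe_sdiff, Set.mem_diff, Finset.mem_coe] at hx hy
  simp only at hxy
  have : x ∈ insert y τ := hxy ▸ Finset.mem_insert_self x τ
  rcases Finset.mem_insert.mp this with h' | h'
  · exact h'
  · exact absurd h' hx.2

lemma bdry_bdry (c : Finset (Finset V)) : bdry (bdry c) = ∅ := by
  ext τ
  simp only [Finset.notMem_empty, iff_false, mem_bdry]
  rw [Nat.not_odd_iff_even]
  have hrw : (bdry c).filter (fun s => τ ⊆ s ∧ s.card = τ.card + 1) =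
      ((Finset.univ : Finset (Finset V)).filter (fun s => τ ⊆ s ∧ s.card = τ.card + 1)).filter
        (fun s => Odd ((c.filter (fun u => s ⊆ u ∧ u.card = s.card + 1)).card)) := by
    rw [bdry, Finset.filter_filter, Finset.filter_filter]
    congr 1; ext s; tauto
  rw [hrw, ← Nat.not_odd_iff_even, odd_card_filter_iff, Nat.not_odd_iff_even]
  -- swap the double counting
  have hswap : ∑ s ∈ (Finset.univ : Finset (Finset V)).filter
        (fun s => τ ⊆ s ∧ s.card = τ.card + 1),
      (c.filter (fun u => s ⊆ u ∧ u.card = s.card + 1)).card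
      = ∑ u ∈ c, ((Finset.univ : Finset (Finset V)).filter
          (fun s => (τ ⊆ s ∧ s.card = τ.card + 1) ∧ (s ⊆ u ∧ u.card = s.card + 1))).card := by
    have push : ∀ (p : Prop) (_ : Decidable p) (g : Finset V → ℕ),
        (if p then ∑ u ∈ c, g u else 0) = ∑ u ∈ c, if p then g u else 0 := by
      intro p _ g; split <;> simp
    simp only [Finset.card_filter, Finset.sum_filter, push]
    rw [Finset.sum_comm]
    apply Finset.sum_congr rfl; intro u _
    apply Finset.sum_congr rfl; intro s _
    by_cases h1 : τ ⊆ s ∧ s.card = τ.card + 1 <;>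
      by_cases h2 : s ⊆ u ∧ u.card = s.card + 1 <;>
      simp [h1, h2]
  rw [hswap]
  apply Finset.even_sum
  intro u hu
  by_cases hcase : τ ⊆ u ∧ u.card = τ.card + 2
  · have : ((Finset.univ : Finset (Finset V)).filter
        (fun s => (τ ⊆ s ∧ s.card = τ.card + 1) ∧ (s ⊆ u ∧ u.card = s.card + 1))).card
        = (u \ τ).card := by
      rw [← card_between τ u hcase.1]
      congr 1; ext s
      simp only [Finset.mem_filter, Finset.mem_univ, true_and]
      constructor
      · rintro ⟨h1, h2, _⟩; exact ⟨h1, h2⟩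
      · rintro ⟨⟨h1, h2⟩, h3⟩; exact ⟨⟨h1, h2⟩, h3, by omega⟩
    rw [this, Finset.card_sdiff_of_subset hcase.1]
    rw [hcase.2]; simp
  · have : ((Finset.univ : Finset (Finset V)).filter
        (fun s => (τ ⊆ s ∧ s.card = τ.card + 1) ∧ (s ⊆ u ∧ u.card = s.card + 1))) = ∅ := by
      rw [Finset.filter_eq_empty_iff]
      rintro s _ ⟨⟨h1, h2⟩, h3, h4⟩
      exact hcase ⟨h1.trans h3, by omega⟩
    rw [this]; simp
lemma bdry_cone {i : ℕ} {c : Finset (Finset V)} (v : V)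
    (hc : ∀ s ∈ c, s.card = i + 1) (hcyc : bdry c = ∅) :
    bdry ((c.filter (fun s => v ∉ s)).image (insert v)) = c := by
  have hinj : ∀ A : Finset (Finset V), (∀ t ∈ A, v ∉ t) →
      Set.InjOn (insert v) (A : Set (Finset V)) := by
    intro A hA x hx y hy hxy
    have hx' := hA x hx; have hy' := hA y hy
    have : x ⊆ y := by
      intro a ha
      have : a ∈ insert v y := hxy ▸ Finset.mem_insert_of_mem ha
      rcases Finset.mem_insert.mp this with rfl | h
      · exact absurd ha hx'
      · exact h
    have h2 : y ⊆ x := by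
      intro a ha
      have : a ∈ insert v x := hxy ▸ Finset.mem_insert_of_mem ha
      rcases Finset.mem_insert.mp this with rfl | h
      · exact absurd ha hy'
      · exact h
    exact Finset.Subset.antisymm this h2
  ext τ
  rw [mem_bdry]
  have hcount : (((c.filter (fun s => v ∉ s)).image (insert v)).filter
      (fun s => τ ⊆ s ∧ s.card = τ.card + 1)).card
      = ((c.filter (fun s => v ∉ s)).filter
      (fun t => τ ⊆ insert v t ∧ (insert v t).card = τ.card + 1)).card := by
    rw [Finset.filter_image, Finset.card_image_of_injOn]
    apply hinj
    intro t ht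
    exact (Finset.mem_filter.mp (Finset.mem_filter.mp ht).1).2
  rw [hcount, Finset.filter_filter]
  by_cases hτ : τ.card = i + 1
  · by_cases hv : v ∈ τ
    · -- count over t ∈ c with v ∉ t and (τ.erase v) ⊆ t
      have heq : (c.filter (fun t => v ∉ t ∧ τ ⊆ insert v t ∧ (insert v t).card = τ.card + 1))
          = c.filter (fun t => v ∉ t ∧ τ.erase v ⊆ t) := by
        apply Finset.filter_congr
        intro t ht
        have hct := hc t ht
        simp only [Finset.subset_insert_iff]
        constructor
        · rintro ⟨h1, h2, _⟩; exact ⟨h1, h2⟩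
        · rintro ⟨h1, h2⟩
          refine ⟨h1, h2, ?_⟩
          rw [Finset.card_insert_of_notMem h1, hct, hτ]
      rw [heq]
      have hbd : Even ((c.filter (fun u => τ.erase v ⊆ u ∧ u.card = (τ.erase v).card + 1)).card) := by
        have : τ.erase v ∉ bdry c := by rw [hcyc]; exact Finset.notMem_empty _
        rw [mem_bdry, Nat.not_odd_iff_even] at this
        exact this
      have herase : (c.filter (fun u => τ.erase v ⊆ u ∧ u.card = (τ.erase v).card + 1))
          = c.filter (fun u => τ.erase v ⊆ u) := by
        apply Finset.filter_congr
        intro u hu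
        have := hc u hu
        have hcard : (τ.erase v).card = i := by
          rw [Finset.card_erase_of_mem hv, hτ]
          omega
        simp [this, hcard]
      rw [herase] at hbd
      have hsplit : (c.filter (fun u => τ.erase v ⊆ u)).card
          = (c.filter (fun t => v ∉ t ∧ τ.erase v ⊆ t)).card
            + (c.filter (fun t => v ∈ t ∧ τ.erase v ⊆ t)).card := by
        simp only [Finset.card_filter, ← Finset.sum_add_distrib]
        apply Finset.sum_congr rfl
        intro t _
        by_cases hvt : v ∈ t <;> by_cases hA : τ.erase v ⊆ t <;> simp [hvt, hA]
      have hlast : (c.filter (fun t => v ∈ t ∧ τ.erase v ⊆ t)) = c.filter (fun t => t = τ) := by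
        apply Finset.filter_congr
        intro t ht
        constructor
        · rintro ⟨h1, h2⟩
          apply (Finset.eq_of_subset_of_card_le ?_ ?_).symm
          · intro a ha
            by_cases hav : a = v
            · exact hav ▸ h1
            · exact h2 (Finset.mem_erase.mpr ⟨hav, ha⟩)
          · rw [hc t ht, hτ]
        · rintro rfl
          exact ⟨hv, Finset.erase_subset _ _⟩
      rw [hlast, Finset.filter_eq'] at hsplit
      by_cases htc : τ ∈ c
      · simp only [htc, if_true, Finset.card_singleton] at hsplit
        simp only [htc, iff_true]
        rw [hsplit] at hbd
        simp only [Nat.odd_iff, Nat.even_iff] at *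
        omega
      · simp only [htc, if_false, Finset.card_empty] at hsplit
        simp only [htc, iff_false]
        rw [hsplit] at hbd
        simp only [Nat.odd_iff, Nat.even_iff] at *
        omega
    · -- v ∉ τ : count is 1 iff τ ∈ c
      have heq : (c.filter (fun t => v ∉ t ∧ τ ⊆ insert v t ∧ (insert v t).card = τ.card + 1))
          = c.filter (fun t => t = τ) := by
        apply Finset.filter_congr
        intro t ht
        constructor
        · rintro ⟨h1, h2, _⟩
          have hsub : τ ⊆ t := by
            intro a ha
            rcases Finset.mem_insert.mp (h2 ha) with rfl | h
            · exact absurd ha hv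
            · exact h
          exact (Finset.eq_of_subset_of_card_le hsub (by rw [hc t ht, hτ])).symm
        · rintro rfl
          refine ⟨hv, Finset.subset_insert _ _, ?_⟩
          rw [Finset.card_insert_of_notMem hv]
      rw [heq, Finset.filter_eq']
      by_cases htc : τ ∈ c <;> simp [htc]
  · -- wrong cardinality: count zero and τ ∉ c
    have heq : (c.filter (fun t => v ∉ t ∧ τ ⊆ insert v t ∧ (insert v t).card = τ.card + 1)) = ∅ := by
      rw [Finset.filter_eq_empty_iff]
      rintro t ht ⟨h1, _, h3⟩
      rw [Finset.card_insert_of_notMem h1, hc t ht] at h3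
      omega
    rw [heq]
    simp only [Finset.card_empty]
    constructor
    · intro h; exact absurd h (by decide)
    · intro h; exact absurd (hc τ h) hτ
lemma indOn_indOn (X : Finset (Finset V)) (U W : Finset V) :
    indOn (indOn X U) W = indOn X (U ∩ W) := by
  ext s
  simp only [indOn, Finset.mem_filter, Finset.subset_inter_iff]
  tauto

lemma indOn_powerset (ρ W : Finset V) :
    indOn (ρ.powerset) W = (ρ ∩ W).powerset := by
  ext s
  simp only [indOn, Finset.mem_filter, Finset.mem_powerset, Finset.subset_inter_iff]

lemma indOn_union (X Y : Finset (Finset V)) (W : Finset V) :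
    indOn (X ∪ Y) W = indOn X W ∪ indOn Y W := by
  ext s
  simp only [indOn, Finset.mem_filter, Finset.mem_union]
  tauto

lemma indOn_subset (X : Finset (Finset V)) (W : Finset V) : indOn X W ⊆ X :=
  Finset.filter_subset _ _

lemma isLeray_mono_k {X : Finset (Finset V)} {k k' : ℕ} (h : IsLeray X k) (hkk : k ≤ k') :
    IsLeray X k' := fun W i hi => h W i (le_trans hkk hi)

lemma isLeray_indOn {X : Finset (Finset V)} {k : ℕ} (h : IsLeray X k) (U : Finset V) :
    IsLeray (indOn X U) k := by
  intro W i hi c hc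
  rw [indOn_indOn] at *
  exact h (U ∩ W) i hi c hc

lemma isLeray_powerset (ρ : Finset V) : IsLeray (ρ.powerset) 0 := by
  intro W i _ c hc
  rw [indOn_powerset] at *
  obtain ⟨⟨hsub, hcard⟩, hcyc⟩ := hc
  rcases Finset.eq_empty_or_nonempty c with rfl | ⟨s, hs⟩
  · exact ⟨∅, ⟨Finset.empty_subset _, by simp⟩, bdry_empty⟩
  · have hsρ : s ⊆ ρ ∩ W := Finset.mem_powerset.mp (hsub hs)
    have hsne : s.Nonempty := Finset.card_pos.mp (by rw [hcard s hs]; omega)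
    obtain ⟨v, hv⟩ := hsne
    have hvρ : v ∈ ρ ∩ W := hsρ hv
    refine ⟨(c.filter (fun t => v ∉ t)).image (insert v), ⟨?_, ?_⟩, ?_⟩
    · intro t ht
      obtain ⟨u, hu, rfl⟩ := Finset.mem_image.mp ht
      rw [Finset.mem_powerset]
      exact Finset.insert_subset hvρ
        (Finset.mem_powerset.mp (hsub (Finset.mem_filter.mp hu).1))
    · intro t ht
      obtain ⟨u, hu, rfl⟩ := Finset.mem_image.mp ht
      rw [Finset.card_insert_of_notMem (Finset.mem_filter.mp hu).2,
        hcard u (Finset.mem_filter.mp hu).1]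
    · exact bdry_cone v hcard hcyc

lemma chAdd_empty_iff {a b : Finset (Finset V)} : chAdd a b = ∅ ↔ a = b := by
  rw [chAdd_eq_symmDiff, ← Finset.bot_eq_empty, symmDiff_eq_bot]

lemma mem_of_mem_bdry {c : Finset (Finset V)} {τ : Finset V} (h : τ ∈ bdry c) :
    ∃ s ∈ c, τ ⊆ s ∧ s.card = τ.card + 1 := by
  rw [mem_bdry] at h
  have : (c.filter (fun s => τ ⊆ s ∧ s.card = τ.card + 1)).Nonempty := by
    rw [← Finset.card_pos]
    rcases h with ⟨k, hk⟩
    omega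
  obtain ⟨s, hs⟩ := this
  rw [Finset.mem_filter] at hs
  exact ⟨s, hs.1, hs.2⟩

lemma mayer_vietoris (Y : Finset (Finset V)) (τ : Finset V) (hY : IsComplex Y) (k : ℕ)
    (hk : 1 ≤ k) (h1 : IsLeray Y k) (h2 : IsLeray (indOn Y τ) (k - 1)) :
    IsLeray (Y ∪ τ.powerset) k := by
  intro W i hi c hcyc
  have hik : 1 ≤ i := le_trans hk hi
  rw [indOn_union] at *
  set Δ : Finset (Finset V) := indOn (τ.powerset) W with hΔ
  obtain ⟨⟨hsub, hcard⟩, hbdryc⟩ := hcyc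
  set a : Finset (Finset V) := c \ Δ with ha
  set b : Finset (Finset V) := c ∩ Δ with hb
  have hab : chAdd a b = c := by
    ext s
    simp only [chAdd, ha, hb, Finset.mem_union, Finset.mem_sdiff, Finset.mem_inter]
    tauto
  have haY : a ⊆ indOn Y W := by
    intro s hs
    rw [ha, Finset.mem_sdiff] at hs
    rcases Finset.mem_union.mp (hsub hs.1) with h | h
    · exact h
    · exact absurd h hs.2
  have hbΔ : b ⊆ Δ := by rw [hb]; exact Finset.inter_subset_right
  have hw : bdry a = bdry b := by
    rw [← chAdd_empty_iff, ← bdry_chAdd, hab, hbdryc]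
  set w : Finset (Finset V) := bdry b with hwdef
  -- w is an (i-1)-cycle of (Y[τ])[W]
  have hwcard : ∀ t ∈ w, t.card = i := by
    intro t ht
    obtain ⟨s, hsb, hts, hcs⟩ := mem_of_mem_bdry ht
    have := hcard s (Finset.mem_inter.mp hsb).1
    omega
  have hwsub : w ⊆ indOn (indOn Y τ) W := by
    intro t ht
    obtain ⟨s, hsb, hts, _⟩ := mem_of_mem_bdry ht
    have hsΔ : s ∈ Δ := hbΔ hsb
    rw [hΔ, indOn_powerset, Finset.mem_powerset] at hsΔ
    obtain ⟨s', hs'a, hts', _⟩ := mem_of_mem_bdry (hw ▸ ht)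
    have hs'Y : s' ∈ indOn Y W := haY hs'a
    rw [indOn, Finset.mem_filter] at hs'Y
    rw [indOn_indOn, indOn, Finset.mem_filter]
    refine ⟨hY s' hs'Y.1 t hts', ?_⟩
    rw [Finset.subset_inter_iff]
    refine ⟨(hts.trans hsΔ).trans Finset.inter_subset_left, hts'.trans hs'Y.2⟩
  obtain ⟨e, ⟨heesub, heecard⟩, hebdry⟩ := h2 W (i - 1) (by omega) w
    ⟨⟨by rwa [indOn_indOn] at hwsub ⊢, fun t ht => by rw [hwcard t ht]; omega⟩,
      bdry_bdry b⟩
  rw [indOn_indOn] at heesub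
  have hecard : ∀ s ∈ e, s.card = i + 1 := by
    intro s hs; rw [heecard s hs]; omega
  have heY : e ⊆ indOn Y W := by
    intro s hs
    have := heesub hs
    rw [indOn, Finset.mem_filter] at this ⊢
    exact ⟨this.1, this.2.trans Finset.inter_subset_right⟩
  have heΔ : e ⊆ Δ := by
    intro s hs
    have := heesub hs
    rw [indOn, Finset.mem_filter] at this
    rw [hΔ, indOn_powerset, Finset.mem_powerset]
    exact this.2
  -- a + e is an i-cycle of Y[W]
  have hacyc : IsNCycle (indOn Y W) i (chAdd a e) := by
    refine ⟨⟨?_, ?_⟩, ?_⟩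
    · intro s hs
      rcases Finset.mem_union.mp hs with h | h
      · exact haY (Finset.mem_sdiff.mp h).1
      · exact heY (Finset.mem_sdiff.mp h).1
    · intro s hs
      rcases Finset.mem_union.mp hs with h | h
      · exact hcard s (Finset.mem_sdiff.mp (Finset.mem_sdiff.mp h).1).1
      · exact hecard s (Finset.mem_sdiff.mp h).1
    · rw [bdry_chAdd, hebdry, chAdd_empty_iff]
      exact hw
  obtain ⟨f, ⟨hfsub, hfcard⟩, hfbdry⟩ := h1 W i hi (chAdd a e) hacyc
  -- b + e is an i-cycle of Δ
  have hbcyc : IsNCycle (indOn (τ.powerset) W) i (chAdd b e) := by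
    refine ⟨⟨?_, ?_⟩, ?_⟩
    · intro s hs
      rcases Finset.mem_union.mp hs with h | h
      · exact hbΔ (Finset.mem_sdiff.mp h).1
      · exact heΔ (Finset.mem_sdiff.mp h).1
    · intro s hs
      rcases Finset.mem_union.mp hs with h | h
      · exact hcard s (Finset.mem_inter.mp (Finset.mem_sdiff.mp h).1).1
      · exact hecard s (Finset.mem_sdiff.mp h).1
    · rw [bdry_chAdd, hebdry, chAdd_empty_iff]
  obtain ⟨g, ⟨hgsub, hgcard⟩, hgbdry⟩ := isLeray_powerset τ W i (Nat.zero_le i) (chAdd b e) hbcyc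
  refine ⟨chAdd f g, ⟨?_, ?_⟩, ?_⟩
  · intro s hs
    rcases Finset.mem_union.mp hs with h | h
    · exact Finset.mem_union_left _ (hfsub (Finset.mem_sdiff.mp h).1)
    · exact Finset.mem_union_right _ (hgsub (Finset.mem_sdiff.mp h).1)
  · intro s hs
    rcases Finset.mem_union.mp hs with h | h
    · exact hfcard s (Finset.mem_sdiff.mp h).1
    · exact hgcard s (Finset.mem_sdiff.mp h).1
  · rw [bdry_chAdd, hfbdry, hgbdry, ← hab]
    ext s
    simp only [chAdd, Finset.mem_union, Finset.mem_sdiff]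
    tauto
lemma build_order (m d : ℕ) (σ : ℕ → Finset V) (hm : 1 ≤ m)
    (hsc : ∀ i j, i < m → j < m → ∃ (ℓ : ℕ) (ρ : ℕ → ℕ), ρ 0 = i ∧ ρ ℓ = j ∧
      (∀ t, t ≤ ℓ → ρ t < m) ∧ ∀ t, t < ℓ → (σ (ρ t) ∩ σ (ρ (t+1))).card = d - 1) :
    ∃ f : ℕ → ℕ, (∀ i, i < m → f i < m) ∧
      (∀ i j, i < m → j < m → f i = f j → i = j) ∧
      (∀ j, 1 ≤ j → j < m → ∃ i, i < j ∧ (σ (f i) ∩ σ (f j)).card = d - 1) := by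
  classical
  have key : ∀ n, 1 ≤ n → n ≤ m → ∃ f : ℕ → ℕ, (∀ i, i < n → f i < m) ∧
      (∀ i j, i < n → j < n → f i = f j → i = j) ∧
      (∀ j, 1 ≤ j → j < n → ∃ i, i < j ∧ (σ (f i) ∩ σ (f j)).card = d - 1) := by
    intro n hn
    induction n, hn using Nat.le_induction with
    | base =>
      intro _
      exact ⟨fun _ => 0, fun i hi => by show 0 < m; omega,
        fun i j hi hj _ => by omega, fun j hj hj' => by omega⟩
    | succ n hn ih =>
      intro hnm
      obtain ⟨f, hfm, hfinj, hfconn⟩ := ih (by omega)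
      set A : Finset ℕ := (Finset.range n).image f with hA
      have hAcard : A.card = n := by
        rw [hA, Finset.card_image_of_injOn, Finset.card_range]
        intro x hx y hy hxy
        exact hfinj x y (Finset.mem_range.mp hx) (Finset.mem_range.mp hy) hxy
      have hAsub : A ⊆ Finset.range m := by
        intro x hx
        obtain ⟨y, hy, rfl⟩ := Finset.mem_image.mp hx
        exact Finset.mem_range.mpr (hfm y (Finset.mem_range.mp hy))
      have hex : (Finset.range m \ A).Nonempty := by
        rw [← Finset.card_pos, Finset.card_sdiff_of_subset hAsub, Finset.card_range, hAcard]
        omega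
      obtain ⟨kk, hkk⟩ := hex
      rw [Finset.mem_sdiff, Finset.mem_range] at hkk
      obtain ⟨ℓ, ρ, hρ0, hρℓ, hρm, hρadj⟩ := hsc (f 0) kk (hfm 0 (by omega)) hkk.1
      have hQℓ : ρ ℓ ∉ A := by rw [hρℓ]; exact hkk.2
      have hQex : ∃ t, ρ t ∉ A := ⟨ℓ, hQℓ⟩
      set t₀ := Nat.find hQex with ht₀
      have ht₀spec : ρ t₀ ∉ A := Nat.find_spec hQex
      have ht₀le : t₀ ≤ ℓ := Nat.find_min' hQex hQℓ
      have ht₀pos : 1 ≤ t₀ := by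
        rcases Nat.eq_zero_or_pos t₀ with h | h
        · exfalso
          apply ht₀spec
          rw [h, hρ0, hA]
          exact Finset.mem_image.mpr ⟨0, Finset.mem_range.mpr (by omega), rfl⟩
        · exact h
      have hprev : ρ (t₀ - 1) ∈ A := by
        by_contra hcon
        have := Nat.find_min' hQex hcon
        omega
      obtain ⟨i', hi'n, hi'⟩ := Finset.mem_image.mp hprev
      rw [Finset.mem_range] at hi'n
      have hadj : (σ (ρ (t₀ - 1)) ∩ σ (ρ t₀)).card = d - 1 := by
        have := hρadj (t₀ - 1) (by omega)
        rwa [Nat.sub_add_cancel ht₀pos] at this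
      refine ⟨Function.update f n (ρ t₀), ?_, ?_, ?_⟩
      · intro i hi
        by_cases h : i = n
        · subst h; rw [Function.update_self]; exact hρm t₀ ht₀le
        · rw [Function.update_of_ne h]; exact hfm i (by omega)
      · intro i j hi hj hij
        by_cases h1 : i = n <;> by_cases h2 : j = n
        · omega
        · exfalso
          subst h1
          rw [Function.update_self, Function.update_of_ne h2] at hij
          refine ht₀spec ?_
          rw [hij]
          exact Finset.mem_image.mpr ⟨j, Finset.mem_range.mpr (by omega), rfl⟩
        · exfalso
          subst h2
          rw [Function.update_of_ne h1, Function.update_self] at hij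
          refine ht₀spec ?_
          rw [← hij]
          exact Finset.mem_image.mpr ⟨i, Finset.mem_range.mpr (by omega), rfl⟩
        · rw [Function.update_of_ne h1, Function.update_of_ne h2] at hij
          exact hfinj i j (by omega) (by omega) hij
      · intro j hj1 hjn
        by_cases h : j = n
        · refine ⟨i', by omega, ?_⟩
          subst h
          rw [Function.update_of_ne (by omega : ¬ i' = j), Function.update_self, hi']
          exact hadj
        · obtain ⟨i, hij, hcard⟩ := hfconn j hj1 (by omega)
          refine ⟨i, hij, ?_⟩
          rw [Function.update_of_ne (by omega : ¬ i = n), Function.update_of_ne h]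
          exact hcard
  exact key m hm le_rfl
lemma powerset_biUnion (t : Finset V) : t.powerset.biUnion id = t := by
  apply Finset.Subset.antisymm
  · intro a ha
    obtain ⟨s, hs, has⟩ := Finset.mem_biUnion.mp ha
    exact Finset.mem_powerset.mp hs has
  · intro a ha
    exact Finset.mem_biUnion.mpr ⟨t, Finset.mem_powerset_self t, ha⟩

lemma biUnion_union_eq (A B : Finset (Finset V)) :
    (A ∪ B).biUnion id = A.biUnion id ∪ B.biUnion id := by
  ext a
  simp only [Finset.mem_biUnion, Finset.mem_union, id]
  constructor
  · rintro ⟨s, h | h, has⟩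
    · exact Or.inl ⟨s, h, has⟩
    · exact Or.inr ⟨s, h, has⟩
  · rintro (⟨s, h, has⟩ | ⟨s, h, has⟩)
    · exact ⟨s, Or.inl h, has⟩
    · exact ⟨s, Or.inr h, has⟩

lemma cUnion_succ (g : ℕ → Finset V) (n : ℕ) :
    cUnion g (n + 1) = cUnion g n ∪ (g n).powerset := by
  rw [cUnion, cUnion, Finset.range_add_one, Finset.biUnion_insert, Finset.union_comm]

lemma cUnion_one (g : ℕ → Finset V) : cUnion g 1 = (g 0).powerset := by
  rw [cUnion]
  simp

lemma isComplex_cUnion (g : ℕ → Finset V) (n : ℕ) : IsComplex (cUnion g n) := by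
  intro s hs t hts
  obtain ⟨i, hi, hsi⟩ := Finset.mem_biUnion.mp hs
  exact Finset.mem_biUnion.mpr ⟨i, hi, Finset.mem_powerset.mpr
    (hts.trans (Finset.mem_powerset.mp hsi))⟩

lemma leray_bound (X : Finset (Finset V)) (m d : ℕ) (g : ℕ → Finset V)
    (hX : IsComplex X) (hm : 1 ≤ m)
    (hgX : ∀ i, i < m → g i ∈ facetsOf X)
    (hsur : ∀ s ∈ facetsOf X, ∃ i, i < m ∧ g i = s)
    (hpure : ∀ i, i < m → (g i).card = d)
    (hconn : ∀ j, 1 ≤ j → j < m → ∃ i, i < j ∧ (g i ∩ g j).card = d - 1) :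
    ∃ k : ℕ, IsLeray X k ∧ (k : ℤ) + ((X.biUnion id)).card ≤ m + d := by
  classical
  have hgXmem : ∀ i, i < m → g i ∈ X := fun i hi => (Finset.filter_subset _ X) (hgX i hi)
  -- every face is below a facet
  have hXfaces : ∀ s ∈ X, ∃ i, i < m ∧ s ⊆ g i := by
    intro s hs
    have hne : (X.filter (fun t => s ⊆ t)).Nonempty :=
      ⟨s, Finset.mem_filter.mpr ⟨hs, Finset.Subset.refl s⟩⟩
    obtain ⟨t, htmem, htmax⟩ := Finset.exists_max_image _ Finset.card hne
    rw [Finset.mem_filter] at htmem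
    have htf : t ∈ facetsOf X := by
      rw [facetsOf, Finset.mem_filter]
      exact ⟨htmem.1, fun u hu htu => Finset.eq_of_subset_of_card_le htu
        (htmax u (Finset.mem_filter.mpr ⟨hu, htmem.2.trans htu⟩))⟩
    obtain ⟨i, him, hi⟩ := hsur t htf
    exact ⟨i, him, hi ▸ htmem.2⟩
  have hXeq : X = cUnion g m := by
    ext s
    simp only [cUnion, Finset.mem_biUnion, Finset.mem_range, Finset.mem_powerset]
    constructor
    · intro hs
      exact hXfaces s hs
    · rintro ⟨i, hi, hsub⟩
      exact hX (g i) (hgXmem i hi) s hsub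
  -- subcomplex vertex sets
  have hVmem : ∀ n i, i < n → g i ⊆ (cUnion g n).biUnion id := by
    intro n i hi a ha
    exact Finset.mem_biUnion.mpr ⟨g i, Finset.mem_biUnion.mpr
      ⟨i, Finset.mem_range.mpr hi, Finset.mem_powerset_self _⟩, ha⟩
  have main : ∀ n, 1 ≤ n → n ≤ m → ∃ k : ℕ, 1 ≤ k ∧ IsLeray (cUnion g n) k ∧
      (k : ℤ) + (((cUnion g n).biUnion id).card : ℤ) ≤ (n : ℤ) + d := by
    intro n hn
    induction n, hn using Nat.le_induction with
    | base =>
      intro _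
      refine ⟨1, le_rfl, ?_, ?_⟩
      · rw [cUnion_one]
        exact isLeray_mono_k (isLeray_powerset _) (by omega)
      · rw [cUnion_one, powerset_biUnion, hpure 0 (by omega)]
    | succ n hn ih =>
      intro hnm
      obtain ⟨k, hk1, hkL, hkb⟩ := ih (by omega)
      obtain ⟨i₀, hi₀n, hi₀card⟩ := hconn n hn (by omega)
      set Y : Finset (Finset V) := cUnion g n with hYdef
      set Vn : Finset V := Y.biUnion id with hVdef
      have hsucc : cUnion g (n + 1) = Y ∪ (g n).powerset := cUnion_succ g n
      have hVsucc : (cUnion g (n + 1)).biUnion id = Vn ∪ g n := by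
        rw [hsucc, biUnion_union_eq, powerset_biUnion]
      have hτi₀V : g i₀ ⊆ Vn := hVmem n i₀ hi₀n
      by_cases hcase : g n ⊆ Vn
      · -- no new vertex: Leray number may go up by one
        refine ⟨k + 1, by omega, ?_, ?_⟩
        · rw [hsucc]
          apply mayer_vietoris Y (g n) (isComplex_cUnion g n) (k + 1) (by omega)
            (isLeray_mono_k hkL (by omega))
          have : k + 1 - 1 = k := by omega
          rw [this]
          exact isLeray_indOn hkL _
        · rw [hVsucc, Finset.union_eq_left.mpr hcase]
          push_cast
          omega
      · -- a new vertex appears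
        obtain ⟨v, hvτ, hvV⟩ : ∃ v ∈ g n, v ∉ Vn := by
          by_contra hcon
          push_neg at hcon
          exact hcase hcon
        have hd1 : 1 ≤ d := by
          have := hpure n (by omega)
          have : (g n).Nonempty := ⟨v, hvτ⟩
          rw [← Finset.card_pos] at this
          rw [hpure n (by omega)] at this
          omega
        have hinterV : g n ∩ Vn = g n ∩ g i₀ := by
          have hsub1 : g n ∩ g i₀ ⊆ g n ∩ Vn :=
            Finset.inter_subset_inter (Finset.Subset.refl _) hτi₀V
          have hsub2 : g n ∩ Vn ⊆ (g n).erase v := by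
            intro x hx
            rw [Finset.mem_inter] at hx
            refine Finset.mem_erase.mpr ⟨?_, hx.1⟩
            rintro rfl
            exact hvV hx.2
          have hc2 : (g n ∩ Vn).card ≤ d - 1 := by
            calc (g n ∩ Vn).card ≤ ((g n).erase v).card := Finset.card_le_card hsub2
            _ = d - 1 := by rw [Finset.card_erase_of_mem hvτ, hpure n (by omega)]
          have hc1 : (g n ∩ g i₀).card = d - 1 := by
            rw [Finset.inter_comm]
            exact hi₀card
          exact (Finset.eq_of_subset_of_card_le hsub1 (by omega)).symm
        have hind : indOn Y (g n) = (g n ∩ g i₀).powerset := by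
          ext s
          simp only [indOn, Finset.mem_filter, Finset.mem_powerset]
          constructor
          · rintro ⟨hsY, hsτ⟩
            have hsV : s ⊆ Vn := by
              intro a ha
              exact Finset.mem_biUnion.mpr ⟨s, hsY, ha⟩
            rw [← hinterV]
            exact Finset.subset_inter hsτ hsV
          · intro hs
            constructor
            · refine Finset.mem_biUnion.mpr ⟨i₀, Finset.mem_range.mpr hi₀n, ?_⟩
              exact Finset.mem_powerset.mpr (hs.trans Finset.inter_subset_right)
            · exact hs.trans Finset.inter_subset_left
        refine ⟨k, hk1, ?_, ?_⟩
        · rw [hsucc]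
          apply mayer_vietoris Y (g n) (isComplex_cUnion g n) k hk1 hkL
          rw [hind]
          exact isLeray_mono_k (isLeray_powerset _) (by omega)
        · rw [hVsucc]
          have hcard : (Vn ∪ g n).card ≤ Vn.card + 1 := by
            have hsub : Vn ∪ g n ⊆ insert v Vn := by
              intro x hx
              rcases Finset.mem_union.mp hx with h | h
              · exact Finset.mem_insert_of_mem h
              · by_cases hxv : x = v
                · exact hxv ▸ Finset.mem_insert_self v Vn
                · by_cases hxV : x ∈ Vn
                  · exact Finset.mem_insert_of_mem hxV
                  · exfalso
                    -- x ∈ g n \ Vn, x ≠ v; but g n \ Vn has card 1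
                    have h1 : g n \ Vn = g n \ (g n ∩ Vn) := by
                      ext y
                      simp only [Finset.mem_sdiff, Finset.mem_inter]
                      tauto
                    have h2 : (g n \ Vn).card = 1 := by
                      rw [h1, Finset.card_sdiff_of_subset Finset.inter_subset_left, hinterV,
                        Finset.inter_comm, hi₀card, hpure n (by omega)]
                      exact Nat.sub_sub_self hd1
                    obtain ⟨w, hw⟩ := Finset.card_eq_one.mp h2
                    have hvw : v ∈ ({w} : Finset V) := by
                      rw [← hw]; exact Finset.mem_sdiff.mpr ⟨hvτ, hvV⟩
                    have hxw : x ∈ ({w} : Finset V) := by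
                      rw [← hw]; exact Finset.mem_sdiff.mpr ⟨h, hxV⟩
                    rw [Finset.mem_singleton] at hvw hxw
                    exact hxv (hxw.trans hvw.symm)
            calc (Vn ∪ g n).card ≤ (insert v Vn).card := Finset.card_le_card hsub
            _ ≤ Vn.card + 1 := Finset.card_insert_le v Vn
          push_cast
          omega
  obtain ⟨k, _, hkL, hkb⟩ := main m hm le_rfl
  rw [← hXeq] at hkL hkb
  exact ⟨k, hkL, by omega⟩


/-- a pure strongly connected complex admits a facet ordering with
`Σ (dim σ_j − conn_≺ σ_j) = 0`, and consequently `L(X) ≤ m − |V(X)| + d`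
(the Eisenbud–Goto bound `deg − codim + 1`). -/
theorem pure_strongly_connected_EG (X : Finset (Finset V)) (m d : ℕ)
    (σ : ℕ → Finset V) (hX : IsComplex X) (hm : 1 ≤ m) (henum : IsFacetEnum X m σ)
    (hpure : ∀ i, i < m → (σ i).card = d)
    (hsc : ∀ i j, i < m → j < m → ∃ (ℓ : ℕ) (ρ : ℕ → ℕ), ρ 0 = i ∧ ρ ℓ = j ∧
      (∀ t, t ≤ ℓ → ρ t < m) ∧ ∀ t, t < ℓ → (σ (ρ t) ∩ σ (ρ (t+1))).card = d - 1) :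
    (∃ τ : ℕ → Finset V, IsFacetEnum X m τ ∧
      ∑ j ∈ Finset.Ico 1 m, (((τ j).card : ℤ) - 1 -
        ((Finset.range j).sup (fun i => (τ i ∩ τ j).card) : ℕ)) = 0) ∧
    (lerayNum X : ℤ) ≤ (m : ℤ) - (X.biUnion id).card + d := by
  classical
  obtain ⟨f, hfm, hfinj, hfconn⟩ := build_order m d σ hm hsc
  have hgX : ∀ i, i < m → σ (f i) ∈ facetsOf X := fun i hi => henum.1 (f i) (hfm i hi)
  have hgpure : ∀ i, i < m → (σ (f i)).card = d := fun i hi => hpure (f i) (hfm i hi)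
  have hgne : ∀ i j, i < m → j < m → i ≠ j → σ (f i) ≠ σ (f j) := by
    intro i j hi hj hne heq
    exact hne (hfinj i j hi hj (henum.2.2 (f i) (f j) (hfm i hi) (hfm j hj) heq))
  have hsur : ∀ s ∈ facetsOf X, ∃ i, i < m ∧ σ (f i) = s := by
    intro s hs
    obtain ⟨i, him, hiσ⟩ := henum.2.1 s hs
    have himg : (Finset.range m).image f = Finset.range m := by
      apply Finset.eq_of_subset_of_card_le
      · intro x hx
        obtain ⟨y, hy, rfl⟩ := Finset.mem_image.mp hx
        exact Finset.mem_range.mpr (hfm y (Finset.mem_range.mp hy))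
      · rw [Finset.card_image_of_injOn, Finset.card_range]
        intro x hx y hy hxy
        exact hfinj x y (by simpa using hx) (by simpa using hy) hxy
    have hmem : i ∈ (Finset.range m).image f := by
      rw [himg]; exact Finset.mem_range.mpr him
    obtain ⟨j, hj, hji⟩ := Finset.mem_image.mp hmem
    exact ⟨j, Finset.mem_range.mp hj, by rw [hji, hiσ]⟩
  have henumτ : IsFacetEnum X m (fun j => σ (f j)) := by
    refine ⟨fun i hi => hgX i hi, hsur, ?_⟩
    intro i j hi hj hij
    exact hfinj i j hi hj (henum.2.2 (f i) (f j) (hfm i hi) (hfm j hj) hij)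
  constructor
  · -- Part 1: the ordering has all connectivity defects zero
    refine ⟨fun j => σ (f j), henumτ, ?_⟩
    apply Finset.sum_eq_zero
    intro j hj
    rw [Finset.mem_Ico] at hj
    have hm2 : 2 ≤ m := by omega
    have hd1 : 1 ≤ d := by
      by_contra hcon
      have h0 : (σ (f 0)).card = 0 := by rw [hgpure 0 (by omega)]; omega
      have h1 : (σ (f 1)).card = 0 := by rw [hgpure 1 (by omega)]; omega
      exact hgne 0 1 (by omega) (by omega) (by omega)
        (by rw [Finset.card_eq_zero.mp h0, Finset.card_eq_zero.mp h1])
    have hsup : (Finset.range j).sup (fun i => (σ (f i) ∩ σ (f j)).card) = d - 1 := by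
      apply le_antisymm
      · apply Finset.sup_le
        intro i hi
        rw [Finset.mem_range] at hi
        have hile : (σ (f i) ∩ σ (f j)).card ≤ d := by
          calc (σ (f i) ∩ σ (f j)).card ≤ (σ (f i)).card :=
            Finset.card_le_card Finset.inter_subset_left
          _ = d := hgpure i (by omega)
        have hineq : (σ (f i) ∩ σ (f j)).card ≠ d := by
          intro hcon
          have he1 : σ (f i) ∩ σ (f j) = σ (f i) := by
            apply Finset.eq_of_subset_of_card_le Finset.inter_subset_left
            rw [hcon, hgpure i (by omega)]
          have he2 : σ (f i) ∩ σ (f j) = σ (f j) := by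
            apply Finset.eq_of_subset_of_card_le Finset.inter_subset_right
            rw [hcon, hgpure j (by omega)]
          exact hgne i j (by omega) (by omega) (by omega) (he1 ▸ he2)
        omega
      · obtain ⟨i, hij, hcard⟩ := hfconn j hj.1 hj.2
        calc d - 1 = (σ (f i) ∩ σ (f j)).card := hcard.symm
        _ ≤ _ := Finset.le_sup (f := fun i => (σ (f i) ∩ σ (f j)).card) (Finset.mem_range.mpr hij)
    rw [hsup, hgpure j hj.2]
    have hcast : ((d - 1 : ℕ) : ℤ) = (d : ℤ) - 1 := by
      omega
    rw [hcast]
    ring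
  · -- Part 2: the Leray bound
    obtain ⟨k, hkL, hkb⟩ := leray_bound X m d (fun j => σ (f j)) hX hm hgX hsur hgpure hfconn
    have hle : lerayNum X ≤ k := Nat.sInf_le hkL
    have hle' : (lerayNum X : ℤ) ≤ (k : ℤ) := by exact_mod_cast hle
    omega
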